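/- Suppose n and n' are I×J matrices of nonnegative integers with the same row and column sums, and suppose b : Fin I × Fin J → ℕ is a bound function with b(i,j) ≥ 1 for all cells, such that n(i,j) ≤ b(i,j) and n'(i,j) ≤ b(i,j) for all (i,j). Then there is a sequence of signed basic moves transforming n into n' such that every intermediate table t satisfies 0 ≤ t(i,j) ≤ b(i,j) for all cells. -/

import Mathlib

/-- The basic move at rows `i1 ≠ i2` and columns `j1 ≠ j2`. -/
def basicMove {I J : ℕ} (i1 i2 : Fin I) (j1 j2 : Fin J) : Fin I × Fin J → ℤ :=
  fun p => (if p = (i1, j1) then 1 else 0) + (if p = (i2, j2) then 1 else 0)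
    - (if p = (i1, j2) then 1 else 0) - (if p = (i2, j1) then 1 else 0)

namespace BddMoves

variable {I J : ℕ}

/-- The "cycle move": +1 at each listed cell, −1 at each cell shifted to next column
(last cell's minus goes to column `jend`). -/
def chain (jend : Fin J) : List (Fin I × Fin J) → (Fin I × Fin J → ℤ)
  | [] => fun _ => 0
  | [p] => fun q => (if q = p then 1 else 0) - (if q = (p.1, jend) then 1 else 0)
  | p :: p' :: rest =>
      (fun q => (if q = p then (1:ℤ) else 0) - (if q = (p.1, p'.2) then 1 else 0))
      + chain jend (p' :: rest)

/-- The cells where `chain` is −1. -/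
def mcells (jend : Fin J) : List (Fin I × Fin J) → List (Fin I × Fin J)
  | [] => []
  | [p] => [(p.1, jend)]
  | p :: p' :: rest => (p.1, p'.2) :: mcells jend (p' :: rest)

lemma mcells_map_fst (jend : Fin J) :
    ∀ L : List (Fin I × Fin J), (mcells jend L).map Prod.fst = L.map Prod.fst := by
  intro L
  induction L with
  | nil => rfl
  | cons p T ih =>
    cases T with
    | nil => rfl
    | cons p' rest => simp [mcells] at ih ⊢; exact ih

lemma chain_apply (jend : Fin J) :
    ∀ L : List (Fin I × Fin J), (L.map Prod.fst).Nodup → ∀ p,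
      chain jend L p = (if p ∈ L then (1:ℤ) else 0) - (if p ∈ mcells jend L then 1 else 0) := by
  intro L
  induction L with
  | nil => intro _ p; simp [chain, mcells]
  | cons p₁ T ih =>
    cases T with
    | nil =>
      intro _ p
      simp only [chain, mcells, List.mem_singleton]
    | cons p₂ rest =>
      intro hnd p
      have hrow : p₁.1 ∉ (p₂ :: rest).map Prod.fst := by
        simpa using (List.nodup_cons.mp hnd).1
      have h1 : p = p₁ → p ∉ p₂ :: rest := by
        intro he hm; exact hrow (he ▸ List.mem_map_of_mem (f := Prod.fst) hm)
      have h2 : p = (p₁.1, p₂.2) → p ∉ mcells jend (p₂ :: rest) := by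
        intro he hm
        have := List.mem_map_of_mem (f := Prod.fst) hm
        rw [mcells_map_fst] at this
        exact hrow (by rw [he] at this; simpa using this)
      have ht := ih (List.nodup_cons.mp hnd).2 p
      have hA : (if p ∈ p₁ :: p₂ :: rest then (1:ℤ) else 0)
          = (if p = p₁ then 1 else 0) + (if p ∈ p₂ :: rest then 1 else 0) := by
        by_cases e1 : p = p₁
        · have h3 : p ∉ p₂ :: rest := h1 e1
          subst e1; simp [h3]
        · by_cases e3 : p ∈ p₂ :: rest <;> simp [e1, e3, List.mem_cons]
      have hB : (if p ∈ (p₁.1, p₂.2) :: mcells jend (p₂ :: rest) then (1:ℤ) else 0)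
          = (if p = (p₁.1, p₂.2) then 1 else 0)
            + (if p ∈ mcells jend (p₂ :: rest) then 1 else 0) := by
        by_cases e2 : p = (p₁.1, p₂.2)
        · have h4 : p ∉ mcells jend (p₂ :: rest) := h2 e2
          subst e2; simp [h4]
        · by_cases e4 : p ∈ mcells jend (p₂ :: rest) <;> simp [e2, e4, List.mem_cons]
      rw [show mcells jend (p₁ :: p₂ :: rest) = (p₁.1, p₂.2) :: mcells jend (p₂ :: rest) from rfl]
      simp only [chain, mcells, Pi.add_apply, ht, hA, hB]
      ring


lemma sum_indicator_row (i : Fin I) (p : Fin I × Fin J) :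
    ∑ j : Fin J, (if ((i, j) : Fin I × Fin J) = p then (1:ℤ) else 0)
      = (if i = p.1 then 1 else 0) := by
  obtain ⟨a, c⟩ := p
  simp only [Prod.mk.injEq]
  by_cases h : i = a
  · subst h
    simp
  · simp [h]

lemma chain_rowsum (jend : Fin J) :
    ∀ L : List (Fin I × Fin J), ∀ i : Fin I, ∑ j, chain jend L (i, j) = 0 := by
  intro L
  induction L with
  | nil => intro i; simp [chain]
  | cons p₁ T ih =>
    cases T with
    | nil =>
      intro i
      simp only [chain, Finset.sum_sub_distrib, sum_indicator_row]
      simp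
    | cons p₂ rest =>
      intro i
      simp only [chain, Pi.add_apply, Finset.sum_add_distrib, ih i,
        Finset.sum_sub_distrib, sum_indicator_row]
      simp

lemma sum_indicator_col (j : Fin J) (p : Fin I × Fin J) :
    ∑ i : Fin I, (if ((i, j) : Fin I × Fin J) = p then (1:ℤ) else 0)
      = (if j = p.2 then 1 else 0) := by
  obtain ⟨a, c⟩ := p
  simp only [Prod.mk.injEq]
  by_cases h : j = c
  · subst h
    simp
  · simp [h]

lemma chain_colsum (jend : Fin J) :
    ∀ (L : List (Fin I × Fin J)) (p₁ : Fin I × Fin J) (j : Fin J),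
      ∑ i, chain jend (p₁ :: L) (i, j)
        = (if j = p₁.2 then 1 else 0) - (if j = jend then 1 else 0) := by
  intro L
  induction L with
  | nil =>
    intro p₁ j
    simp only [chain, Finset.sum_sub_distrib, sum_indicator_col]
  | cons p₂ rest ih =>
    intro p₁ j
    simp only [chain, Pi.add_apply, Finset.sum_add_distrib, ih p₂ j,
      Finset.sum_sub_distrib, sum_indicator_col]
    ring

/-- The condition that a list of cells forms an alternating (deficit/surplus) cycle
for the pair of tables `x`, `y`. -/
def okL (x y : Fin I × Fin J → ℤ) (jend : Fin J) : List (Fin I × Fin J) → Prop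
  | [] => True
  | [p] => x p < y p ∧ y (p.1, jend) < x (p.1, jend)
  | p :: p' :: rest => x p < y p ∧ y (p.1, p'.2) < x (p.1, p'.2) ∧ okL x y jend (p' :: rest)

lemma okL_plus {x y : Fin I × Fin J → ℤ} {jend : Fin J} :
    ∀ L : List (Fin I × Fin J), okL x y jend L → ∀ p ∈ L, x p < y p := by
  intro L
  induction L with
  | nil => intro _ p hp; simp at hp
  | cons p₁ T ih =>
    cases T with
    | nil =>
      intro h p hp
      simp only [List.mem_singleton] at hp
      exact hp ▸ h.1
    | cons p₂ rest =>
      intro h p hp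
      rcases List.mem_cons.mp hp with h1 | h2
      · exact h1 ▸ h.1
      · exact ih h.2.2 p h2

lemma okL_minus {x y : Fin I × Fin J → ℤ} {jend : Fin J} :
    ∀ L : List (Fin I × Fin J), okL x y jend L → ∀ p ∈ mcells jend L, y p < x p := by
  intro L
  induction L with
  | nil => intro _ p hp; simp [mcells] at hp
  | cons p₁ T ih =>
    cases T with
    | nil =>
      intro h p hp
      simp only [mcells, List.mem_singleton] at hp
      exact hp ▸ h.2
    | cons p₂ rest =>
      intro h p hp
      rcases List.mem_cons.mp hp with h1 | h2
      · exact h1 ▸ h.2.1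
      · exact ih h.2.2 p h2


def SignedBasic {I J : ℕ} (m : Fin I × Fin J → ℤ) : Prop :=
  ∃ (i1 i2 : Fin I) (j1 j2 : Fin J), i1 ≠ i2 ∧ j1 ≠ j2 ∧
    (m = basicMove i1 i2 j1 j2 ∨ m = -basicMove i1 i2 j1 j2)

def InB (b x : Fin I × Fin J → ℤ) : Prop := ∀ p, 0 ≤ x p ∧ x p ≤ b p

lemma lemA (b : Fin I × Fin J → ℤ) (hb : ∀ p, 1 ≤ b p) (p₁ : Fin I × Fin J) :
    ∀ (L' : List (Fin I × Fin J)) (x : Fin I × Fin J → ℤ), L' ≠ [] →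
      ((p₁ :: L').map Prod.fst).Nodup → ((p₁ :: L').map Prod.snd).Nodup →
      InB b x → InB b (x + chain p₁.2 (p₁ :: L')) →
      ∃ M : List (Fin I × Fin J → ℤ), (∀ m ∈ M, SignedBasic m) ∧
        M.sum = chain p₁.2 (p₁ :: L') ∧
        ∀ k, InB b (x + (M.take k).sum) := by
  intro L'
  induction L' with
  | nil => intro x h; exact absurd rfl h
  | cons p₂ T ih =>
    cases T with
    | nil =>
      intro x _ hrows hcols hx hxc
      have hi : p₁.1 ≠ p₂.1 := by simp at hrows; tauto
      have hj : p₁.2 ≠ p₂.2 := by simp at hcols; tauto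
      have hc : chain p₁.2 [p₁, p₂] = basicMove p₁.1 p₂.1 p₁.2 p₂.2 := by
        funext q
        simp only [chain, basicMove, Pi.add_apply, Prod.mk.eta]
        ring
      refine ⟨[basicMove p₁.1 p₂.1 p₁.2 p₂.2], ?_, by simp [hc], ?_⟩
      · intro m hm
        simp only [List.mem_singleton] at hm
        exact ⟨p₁.1, p₂.1, p₁.2, p₂.2, hi, hj, Or.inl hm⟩
      · intro k
        cases k with
        | zero => simpa using hx
        | succ k => simpa [hc] using hxc
    | cons p₃ T' =>
      intro x _ hrows hcols hx hxc
      set j1 := p₁.2 with hj1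
      set R := basicMove p₁.1 p₂.1 p₃.2 p₂.2 with hR
      set c := chain j1 (p₁ :: p₂ :: p₃ :: T') with hcdef
      set c'' := chain j1 (p₁ :: p₃ :: T') with hc''def
      set chord : Fin I × Fin J := (p₁.1, p₃.2) with hchord
      -- nodup facts
      have hr12 : p₁.1 ≠ p₂.1 := by simp at hrows; tauto
      have hr1T : p₁.1 ∉ (p₃ :: T').map Prod.fst := by simp at hrows ⊢; tauto
      have hr2T : p₂.1 ∉ (p₃ :: T').map Prod.fst := by simp at hrows ⊢; tauto
      have hc12 : p₁.2 ≠ p₂.2 := by simp at hcols; tauto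
      have hc13 : p₁.2 ≠ p₃.2 := by simp at hcols; tauto
      have hc23 : p₂.2 ≠ p₃.2 := by simp at hcols; tauto
      have hsub : List.Sublist (p₁ :: p₃ :: T') (p₁ :: p₂ :: p₃ :: T') :=
        List.Sublist.cons₂ p₁ (List.sublist_cons_self p₂ (p₃ :: T'))
      have hrS : ((p₁ :: p₃ :: T').map Prod.fst).Nodup :=
        (hrows.sublist (hsub.map Prod.fst))
      have hcS : ((p₁ :: p₃ :: T').map Prod.snd).Nodup :=
        (hcols.sublist (hsub.map Prod.snd))
      -- algebraic decomposition
      have hdec : c = R + c'' := by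
        funext q
        simp only [hcdef, hc''def, hR, chain, basicMove, Pi.add_apply]
        ring
      -- membership facts for the shortened cycle
      have hmS : mcells j1 (p₁ :: p₃ :: T') = chord :: mcells j1 (p₃ :: T') := rfl
      have hmrows := mcells_map_fst (I := I) j1 (p₃ :: T')
      have m1 : (p₁.1, p₂.2) ∉ (p₁ :: p₃ :: T') := by
        intro h
        rcases List.mem_cons.mp h with h | h
        · exact hc12 (congrArg Prod.snd h).symm
        · exact hr1T (by simpa using List.mem_map_of_mem (f := Prod.fst) h)
      have m2 : (p₁.1, p₂.2) ∉ mcells j1 (p₁ :: p₃ :: T') := by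
        rw [hmS]
        intro h
        rcases List.mem_cons.mp h with h | h
        · rw [Prod.mk.injEq] at h; exact hc23 h.2
        · have := List.mem_map_of_mem (f := Prod.fst) h
          rw [hmrows] at this
          exact hr1T (by simpa using this)
      have m3 : ∀ q : Fin I × Fin J, q.1 = p₂.1 →
          q ∉ (p₁ :: p₃ :: T') ∧ q ∉ mcells j1 (p₁ :: p₃ :: T') := by
        intro q hq
        constructor
        · intro h
          rcases List.mem_cons.mp h with h | h
          · exact hr12 (by rw [← h, hq])
          · exact hr2T (by rw [← hq]; exact List.mem_map_of_mem (f := Prod.fst) h)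
        · rw [hmS]
          intro h
          rcases List.mem_cons.mp h with h | h
          · exact hr12 (by rw [← congrArg Prod.fst h, hq])
          · have := List.mem_map_of_mem (f := Prod.fst) h
            rw [hmrows] at this
            exact hr2T (by rw [← hq]; exact this)
      have m4a : chord ∈ mcells j1 (p₁ :: p₃ :: T') := by rw [hmS]; exact List.mem_cons_self
      have m4b : chord ∉ (p₁ :: p₃ :: T') := by
        intro h
        rcases List.mem_cons.mp h with h | h
        · exact hc13 (congrArg Prod.snd h).symm
        · exact hr1T (by simpa using List.mem_map_of_mem (f := Prod.fst) h)
      have v1 : c'' (p₁.1, p₂.2) = 0 := by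
        rw [hc''def, chain_apply _ _ hrS]; simp [m1, m2]
      have v2 : c'' (p₂.1, p₂.2) = 0 := by
        rw [hc''def, chain_apply _ _ hrS]
        have := m3 (p₂.1, p₂.2) rfl
        simp [this.1, this.2]
      have v3 : c'' (p₂.1, p₃.2) = 0 := by
        rw [hc''def, chain_apply _ _ hrS]
        have := m3 (p₂.1, p₃.2) rfl
        simp [this.1, this.2]
      have v4 : c'' chord = -1 := by
        rw [hc''def, chain_apply _ _ hrS]; simp [m4a, m4b]
      have hcq : ∀ q, c q = R q + c'' q := by
        intro q; rw [hdec]; rfl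
      have key : ∀ q, q ≠ chord → R q = 0 ∨ c'' q = 0 := by
        intro q hq
        by_cases e1 : q = (p₁.1, p₂.2)
        · right; rw [e1]; exact v1
        by_cases e2 : q = (p₂.1, p₂.2)
        · right; rw [e2]; exact v2
        by_cases e3 : q = (p₂.1, p₃.2)
        · right; rw [e3]; exact v3
        · left
          have hq' : q ≠ (p₁.1, p₃.2) := hq
          simp only [hR, basicMove, Prod.mk.eta, if_neg hq', if_neg e1, if_neg e2, if_neg e3]
          ring
      have hRchord : R chord = 1 := by
        have n2 : chord ≠ (p₂.1, p₂.2) := by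
          intro h; rw [Prod.mk.injEq] at h; exact hr12 h.1
        have n3 : chord ≠ (p₁.1, p₂.2) := by
          intro h; rw [Prod.mk.injEq] at h; exact hc23 h.2.symm
        have n4 : chord ≠ (p₂.1, p₃.2) := by
          intro h; rw [Prod.mk.injEq] at h; exact hr12 h.1
        simp only [hR, basicMove, Prod.mk.eta, if_pos rfl, if_neg n2, if_neg n3, if_neg n4]
        simp [hchord]
      by_cases hch : x chord + 1 ≤ b chord
      · -- apply the rectangle R first
        have hx1 : InB b (x + R) := by
          intro q
          by_cases hq : q = chord
          · subst hq
            simp only [Pi.add_apply, hRchord]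
            exact ⟨by linarith [(hx chord).1], hch⟩
          · rcases key q hq with h | h
            · simpa [Pi.add_apply, h] using hx q
            · have : (x + R) q = (x + c) q := by
                simp only [Pi.add_apply, hcq q, h]; ring
              rw [this]; exact hxc q
        have hx1c : InB b ((x + R) + c'') := by
          have : (x + R) + c'' = x + c := by rw [hdec]; ring
          rw [this]; exact hxc
        obtain ⟨M'', hmem, hsum, htake⟩ :=
          ih (x + R) (by simp) hrS hcS hx1 hx1c
        refine ⟨R :: M'', ?_, ?_, ?_⟩
        · intro m hm
          rcases List.mem_cons.mp hm with h | h
          · exact h ▸ ⟨p₁.1, p₂.1, p₃.2, p₂.2, hr12, hc23.symm, Or.inl rfl⟩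
          · exact hmem m h
        · rw [List.sum_cons, hsum, hdec]
        · intro k
          cases k with
          | zero => simpa using hx
          | succ k =>
            have : x + (List.take (k+1) (R :: M'')).sum = (x + R) + (List.take k M'').sum := by
              rw [List.take_succ_cons, List.sum_cons]; ring
            rw [this]; exact htake k
      · -- apply the shortened cycle first
        have hxge : 1 ≤ x chord := by
          have h1 := (hx chord).2
          have h2 := hb chord
          omega
        have hx2 : InB b (x + c'') := by
          intro q
          by_cases hq : q = chord
          · subst hq
            simp only [Pi.add_apply, v4]
            constructor
            · omega
            · linarith [(hx chord).2]
          · rcases key q hq with h | h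
            · have : (x + c'') q = (x + c) q := by
                simp only [Pi.add_apply, hcq q, h]; ring
              rw [this]; exact hxc q
            · simpa [Pi.add_apply, h] using hx q
        obtain ⟨M'', hmem, hsum, htake⟩ :=
          ih x (by simp) hrS hcS hx hx2
        refine ⟨M'' ++ [R], ?_, ?_, ?_⟩
        · intro m hm
          rcases List.mem_append.mp hm with h | h
          · exact hmem m h
          · simp only [List.mem_singleton] at h
            exact h ▸ ⟨p₁.1, p₂.1, p₃.2, p₂.2, hr12, hc23.symm, Or.inl rfl⟩
        · rw [List.sum_append, hsum, hdec, List.sum_singleton]; ring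
        · intro k
          rw [List.take_append, List.sum_append]
          by_cases hk : k ≤ M''.length
          · have hz : k - M''.length = 0 := Nat.sub_eq_zero_of_le hk
            rw [hz]
            simpa using htake k
          · have hk' : M''.length ≤ k := le_of_not_ge hk
            have h1 : List.take k M'' = M'' := List.take_of_length_le hk'
            have h2 : List.take (k - M''.length) [R] = [R] := by
              apply List.take_of_length_le
              simp
              omega
            rw [h1, h2, hsum, List.sum_singleton]
            have : x + (c'' + R) = x + c := by rw [hdec]; ring
            rw [this]
            exact hxc
  

lemma okL_build (x y : Fin I × Fin J → ℤ) (jend : Fin J) :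
    ∀ (k : ℕ) (F : ℕ → Fin I × Fin J) (p₁ : Fin I × Fin J),
      x p₁ < y p₁ → k ≠ 0 →
      (∀ t, t < k → x (F t) < y (F t)) →
      y (p₁.1, (F 0).2) < x (p₁.1, (F 0).2) →
      (∀ t, t + 1 < k → y ((F t).1, (F (t+1)).2) < x ((F t).1, (F (t+1)).2)) →
      y ((F (k-1)).1, jend) < x ((F (k-1)).1, jend) →
      okL x y jend (p₁ :: (List.range k).map F) := by
  intro k
  induction k with
  | zero => intro F p₁ _ h; exact absurd rfl h
  | succ k ihk =>
    intro F p₁ hp₁ _ hdef hs0 hmid hlast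
    rw [List.range_succ_eq_map, List.map_cons, List.map_map]
    cases k with
    | zero =>
      simp only [List.range_zero, List.map_nil]
      exact ⟨hp₁, hs0, hdef 0 (by omega), by simpa using hlast⟩
    | succ k' =>
      have hrec := ihk (F ∘ Nat.succ) (F 0) (hdef 0 (by omega)) (by omega)
        (fun t ht => hdef (t+1) (by omega))
        (by simpa using hmid 0 (by omega))
        (fun t ht => by
          have := hmid (t+1) (by omega)
          simpa using this)
        (by
          have : (k' + 1 + 1) - 1 = (k'+1) := rfl
          simpa using hlast)
      exact ⟨hp₁, hs0, hrec⟩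


lemma exists_gt {α : Type*} [Fintype α] (f g : α → ℤ)
    (hsum : ∑ a, f a = ∑ a, g a) {a₀ : α} (h : f a₀ < g a₀) : ∃ a, g a < f a := by
  by_contra h'
  push_neg at h'
  have hlt : ∑ a, f a < ∑ a, g a :=
    Finset.sum_lt_sum (fun i _ => h' i) ⟨a₀, Finset.mem_univ _, h⟩
  omega

lemma lemB (x y : Fin I × Fin J → ℤ)
    (hrow : ∀ i, ∑ j, x (i, j) = ∑ j, y (i, j))
    (hcol : ∀ j, ∑ i, x (i, j) = ∑ i, y (i, j))
    (hne : x ≠ y) :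
    ∃ (p₁ : Fin I × Fin J) (L' : List (Fin I × Fin J)), L' ≠ [] ∧
      ((p₁ :: L').map Prod.fst).Nodup ∧ ((p₁ :: L').map Prod.snd).Nodup ∧
      okL x y p₁.2 (p₁ :: L') := by
  classical
  have hp0 : ∃ p, x p < y p := by
    by_contra h
    push_neg at h
    apply hne
    funext q
    by_contra hne2
    have hlt : y q < x q := lt_of_le_of_ne (h q) fun e => hne2 e.symm
    have htot : ∑ p : Fin I × Fin J, x p = ∑ p, y p := by
      rw [Fintype.sum_prod_type, Fintype.sum_prod_type]
      exact Finset.sum_congr rfl fun i _ => hrow i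
    have := Finset.sum_lt_sum (fun i _ => h i) ⟨q, Finset.mem_univ _, hlt⟩
    omega
  obtain ⟨p0, hp0⟩ := hp0
  have rowS : ∀ p : Fin I × Fin J, x p < y p → ∃ j', y (p.1, j') < x (p.1, j') := by
    intro p hp
    exact exists_gt (fun j => x (p.1, j)) (fun j => y (p.1, j)) (hrow p.1)
      (a₀ := p.2) (by simpa using hp)
  have colS : ∀ p : Fin I × Fin J, y p < x p →
      ∃ i', (x (i', p.2) < y (i', p.2)) ∧ i' ≠ p.1 := by
    intro p hp
    obtain ⟨i', hi'⟩ := exists_gt (fun i => y (i, p.2)) (fun i => x (i, p.2)) (hcol p.2).symm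
      (a₀ := p.1) (by simpa using hp)
    refine ⟨i', hi', fun he => ?_⟩
    rw [he] at hi'
    simp only [Prod.mk.eta] at hi'
    exact absurd hi' (not_lt.mpr hp.le)
  choose js hjs using rowS
  choose is his hisne using colS
  let Φ : {p : Fin I × Fin J // x p < y p} → {p : Fin I × Fin J // x p < y p} :=
    fun q => ⟨(is (q.1.1, js q.1 q.2) (hjs q.1 q.2), js q.1 q.2), his _ _⟩
  let D : ℕ → {p : Fin I × Fin J // x p < y p} := fun t => Φ^[t] ⟨p0, hp0⟩
  let r : ℕ → Fin I := fun t => (D t).1.1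
  let c : ℕ → Fin J := fun t => (D t).1.2
  have hdef : ∀ t, x (r t, c t) < y (r t, c t) := by
    intro t
    have := (D t).2
    simpa [r, c, Prod.mk.eta] using this
  have hDsucc : ∀ t, D (t+1) = Φ (D t) := fun t => Function.iterate_succ_apply' Φ t _
  have hsur : ∀ t, y (r t, c (t+1)) < x (r t, c (t+1)) := by
    intro t
    have h1 : c (t+1) = js (D t).1 (D t).2 := by
      show (D (t+1)).1.2 = _
      rw [hDsucc t]
    have h2 : r t = (D t).1.1 := rfl
    rw [h1, h2]
    exact hjs (D t).1 (D t).2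
  have hrne : ∀ t, r (t+1) ≠ r t := by
    intro t
    have h1 : r (t+1) = is ((D t).1.1, js (D t).1 (D t).2) (hjs (D t).1 (D t).2) := by
      show (D (t+1)).1.1 = _
      rw [hDsucc t]
    rw [h1]
    exact hisne _ _
  have hcne : ∀ t, c (t+1) ≠ c t := by
    intro t he
    have h1 := hdef t
    have h2 := hsur t
    rw [he] at h2
    exact absurd h1 (not_lt.mpr h2.le)
  have hbad : ∃ t, ∃ s, s < t ∧ (r s = r t ∨ c s = c t) := by
    obtain ⟨a, b, hab, he⟩ :=
      Fintype.exists_ne_map_eq_of_card_lt (fun t : Fin (I+1) => r t.1) (by simp)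
    rcases lt_or_gt_of_ne hab with h | h
    · exact ⟨b.1, a.1, h, Or.inl he⟩
    · exact ⟨a.1, b.1, h, Or.inl he.symm⟩
  set m := Nat.find hbad with hm
  obtain ⟨s₀, hs₀m, hcase⟩ := Nat.find_spec hbad
  have hrinj : ∀ s t, s < t → t < m → r s ≠ r t := by
    intro s t h1 h2 he
    exact Nat.find_min hbad h2 ⟨s, h1, Or.inl he⟩
  have hcinj : ∀ s t, s < t → t < m → c s ≠ c t := by
    intro s t h1 h2 he
    exact Nat.find_min hbad h2 ⟨s, h1, Or.inr he⟩
  by_cases hcc : ∃ v, v < m ∧ c v = c m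
  · -- a column repeats: close the cycle on columns
    obtain ⟨v, hvm, hcv⟩ := hcc
    have hk2 : v + 2 ≤ m := by
      rcases Nat.lt_or_ge (v+1) m with h | h
      · omega
      · have hvm1 : v + 1 = m := by omega
        exact absurd (hvm1 ▸ hcv.symm) (hcne v)
    set k := m - v - 1 with hk
    have hkpos : k ≠ 0 := by omega
    refine ⟨(r v, c v), (List.range k).map (fun t => (r (v+1+t), c (v+1+t))), ?_, ?_, ?_, ?_⟩
    · simp only [ne_eq, List.map_eq_nil_iff, List.range_eq_nil]
      exact hkpos
    · -- rows nodup
      rw [List.map_cons, List.map_map]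
      refine List.nodup_cons.mpr ⟨?_, ?_⟩
      · intro hmem
        simp only [List.mem_map, List.mem_range] at hmem
        obtain ⟨t, ht, hte⟩ := hmem
        exact hrinj v (v+1+t) (by omega) (by omega) hte.symm
      · refine List.Nodup.map_on ?_ List.nodup_range
        intro t1 h1 t2 h2 hre
        simp only [List.mem_range] at h1 h2
        by_contra hne12
        rcases Nat.lt_or_ge t1 t2 with h | h
        · exact hrinj (v+1+t1) (v+1+t2) (by omega) (by omega) (by simpa using hre)
        · have h' : t2 < t1 := by omega
          exact hrinj (v+1+t2) (v+1+t1) (by omega) (by omega) (by simpa using hre.symm)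
    · -- cols nodup
      rw [List.map_cons, List.map_map]
      refine List.nodup_cons.mpr ⟨?_, ?_⟩
      · intro hmem
        simp only [List.mem_map, List.mem_range] at hmem
        obtain ⟨t, ht, hte⟩ := hmem
        exact hcinj v (v+1+t) (by omega) (by omega) hte.symm
      · refine List.Nodup.map_on ?_ List.nodup_range
        intro t1 h1 t2 h2 hre
        simp only [List.mem_range] at h1 h2
        by_contra hne12
        rcases Nat.lt_or_ge t1 t2 with h | h
        · exact hcinj (v+1+t1) (v+1+t2) (by omega) (by omega) (by simpa using hre)
        · have h' : t2 < t1 := by omega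
          exact hcinj (v+1+t2) (v+1+t1) (by omega) (by omega) (by simpa using hre.symm)
    · -- okL
      refine okL_build x y (c v) k _ _ (hdef v) hkpos ?_ ?_ ?_ ?_
      · intro t ht
        exact hdef (v+1+t)
      · exact hsur v
      · intro t ht
        exact hsur (v+1+t)
      · have h1 := hsur (m-1)
        rw [show m-1+1 = m by omega] at h1
        rw [← hcv] at h1
        have e : v+1+(k-1) = m-1 := by omega
        rw [e]
        exact h1
  · -- a row repeats: close the cycle on rows
    have hnc : ∀ v, v < m → c v ≠ c m := by
      push_neg at hcc
      exact fun v h => hcc v h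
    obtain ⟨s, hsm, hrs⟩ : ∃ s, s < m ∧ r s = r m := by
      rcases hcase with h | h
      · exact ⟨s₀, hs₀m, h⟩
      · exact absurd h (hnc s₀ hs₀m)
    have hk2 : s + 2 ≤ m := by
      rcases Nat.lt_or_ge (s+1) m with h | h
      · omega
      · have hsm1 : s + 1 = m := by omega
        exact absurd (hsm1 ▸ hrs.symm) (hrne s)
    set k := m - s - 1 with hk
    have hkpos : k ≠ 0 := by omega
    refine ⟨(r s, c m), (List.range k).map (fun t => (r (s+1+t), c (s+1+t))), ?_, ?_, ?_, ?_⟩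
    · simp only [ne_eq, List.map_eq_nil_iff, List.range_eq_nil]
      exact hkpos
    · rw [List.map_cons, List.map_map]
      refine List.nodup_cons.mpr ⟨?_, ?_⟩
      · intro hmem
        simp only [List.mem_map, List.mem_range] at hmem
        obtain ⟨t, ht, hte⟩ := hmem
        exact hrinj s (s+1+t) (by omega) (by omega) hte.symm
      · refine List.Nodup.map_on ?_ List.nodup_range
        intro t1 h1 t2 h2 hre
        simp only [List.mem_range] at h1 h2
        by_contra hne12
        rcases Nat.lt_or_ge t1 t2 with h | h
        · exact hrinj (s+1+t1) (s+1+t2) (by omega) (by omega) (by simpa using hre)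
        · have h' : t2 < t1 := by omega
          exact hrinj (s+1+t2) (s+1+t1) (by omega) (by omega) (by simpa using hre.symm)
    · rw [List.map_cons, List.map_map]
      refine List.nodup_cons.mpr ⟨?_, ?_⟩
      · intro hmem
        simp only [List.mem_map, List.mem_range] at hmem
        obtain ⟨t, ht, hte⟩ := hmem
        exact hnc (s+1+t) (by omega) hte
      · refine List.Nodup.map_on ?_ List.nodup_range
        intro t1 h1 t2 h2 hre
        simp only [List.mem_range] at h1 h2
        by_contra hne12
        rcases Nat.lt_or_ge t1 t2 with h | h
        · exact hcinj (s+1+t1) (s+1+t2) (by omega) (by omega) (by simpa using hre)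
        · have h' : t2 < t1 := by omega
          exact hcinj (s+1+t2) (s+1+t1) (by omega) (by omega) (by simpa using hre.symm)
    · refine okL_build x y (c m) k _ _ ?_ hkpos ?_ ?_ ?_ ?_
      · have := hdef m
        rw [← hrs] at this
        exact this
      · intro t ht
        exact hdef (s+1+t)
      · exact hsur s
      · intro t ht
        exact hsur (s+1+t)
      · have h1 := hsur (m-1)
        rw [show m-1+1 = m by omega] at h1
        have e : s+1+(k-1) = m-1 := by omega
        rw [e]
        exact h1


lemma mainZ (b : Fin I × Fin J → ℤ) (hb : ∀ p, 1 ≤ b p) :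
    ∀ (N : ℕ) (x y : Fin I × Fin J → ℤ),
      (∑ p : Fin I × Fin J, |x p - y p|).toNat ≤ N →
      InB b x → InB b y →
      (∀ i, ∑ j, x (i, j) = ∑ j, y (i, j)) →
      (∀ j, ∑ i, x (i, j) = ∑ i, y (i, j)) →
      ∃ L : List (Fin I × Fin J → ℤ), (∀ m ∈ L, SignedBasic m) ∧
        x + L.sum = y ∧ ∀ k, InB b (x + (L.take k).sum) := by
  intro N
  induction N with
  | zero =>
    intro x y hd hx hy hr hc
    have hxy : x = y := by
      have h0 : ∑ p : Fin I × Fin J, |x p - y p| ≤ 0 :=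
        Int.toNat_eq_zero.mp (Nat.le_zero.mp hd)
      have hz : ∑ p : Fin I × Fin J, |x p - y p| = 0 :=
        le_antisymm h0 (Finset.sum_nonneg fun p _ => abs_nonneg _)
      funext p
      have h1 := (Finset.sum_eq_zero_iff_of_nonneg
        (fun (p : Fin I × Fin J) _ => abs_nonneg (x p - y p))).mp hz p (Finset.mem_univ p)
      have h2 := abs_eq_zero.mp h1
      linarith [h2]
    subst hxy
    exact ⟨[], by simp, by simp, fun k => by simpa using hx⟩
  | succ N ihN =>
    intro x y hd hx hy hr hc
    by_cases hxy : x = y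
    · subst hxy
      exact ⟨[], by simp, by simp, fun k => by simpa using hx⟩
    obtain ⟨p₁, L', hL'ne, hrows, hcols, hok⟩ := lemB x y hr hc hxy
    set c := chain p₁.2 (p₁ :: L') with hcdef
    have hcompat : ∀ q, c q = 0 ∨ (c q = 1 ∧ x q < y q) ∨ (c q = -1 ∧ y q < x q) := by
      intro q
      rw [hcdef, chain_apply _ _ hrows]
      by_cases h1 : q ∈ p₁ :: L'
      · have hx' : x q < y q := okL_plus _ hok q h1
        have h2 : q ∉ mcells p₁.2 (p₁ :: L') := fun hm =>
          absurd hx' (not_lt.mpr (okL_minus _ hok q hm).le)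
        exact Or.inr (Or.inl ⟨by simp [h1, h2], hx'⟩)
      · by_cases h2 : q ∈ mcells p₁.2 (p₁ :: L')
        · exact Or.inr (Or.inr ⟨by simp [h1, h2], okL_minus _ hok q h2⟩)
        · exact Or.inl (by simp [h1, h2])
    have hxp1 : x p₁ < y p₁ := okL_plus _ hok p₁ (List.mem_cons_self)
    have hcp1 : c p₁ = 1 := by
      have hnm : p₁ ∉ mcells p₁.2 (p₁ :: L') := fun hm =>
        absurd hxp1 (not_lt.mpr (okL_minus _ hok p₁ hm).le)
      rw [hcdef, chain_apply _ _ hrows]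
      simp [List.mem_cons_self, hnm]
    have hxc : InB b (x + c) := by
      intro q
      rcases hcompat q with h | ⟨h, hlt⟩ | ⟨h, hlt⟩ <;> simp only [Pi.add_apply, h]
      · simpa using hx q
      · have := (hx q).1
        have := (hy q).2
        constructor <;> omega
      · have := (hy q).1
        have := (hx q).2
        constructor <;> omega
    have hr' : ∀ i, ∑ j, (x + c) (i, j) = ∑ j, y (i, j) := by
      intro i
      simp only [Pi.add_apply]
      rw [Finset.sum_add_distrib, hcdef, chain_rowsum, add_zero]
      exact hr i
    have hc' : ∀ j, ∑ i, (x + c) (i, j) = ∑ i, y (i, j) := by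
      intro j
      simp only [Pi.add_apply]
      rw [Finset.sum_add_distrib, hcdef, chain_colsum]
      simp only [sub_self, add_zero]
      exact hc j
    have hdlt : ∑ p : Fin I × Fin J, |(x + c) p - y p| < ∑ p : Fin I × Fin J, |x p - y p| := by
      apply Finset.sum_lt_sum
      · intro q _
        rcases hcompat q with h | ⟨h, hlt⟩ | ⟨h, hlt⟩ <;>
          simp only [Pi.add_apply, h] <;>
          rw [Int.abs_eq_natAbs, Int.abs_eq_natAbs] <;> omega
      · refine ⟨p₁, Finset.mem_univ _, ?_⟩
        simp only [Pi.add_apply, hcp1]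
        rw [Int.abs_eq_natAbs, Int.abs_eq_natAbs]
        omega
    have hd' : (∑ p : Fin I × Fin J, |(x + c) p - y p|).toNat ≤ N := by
      have h0 : 0 ≤ ∑ p : Fin I × Fin J, |(x + c) p - y p| :=
        Finset.sum_nonneg fun p _ => abs_nonneg _
      omega
    obtain ⟨M2, hM2mem, hM2sum, hM2take⟩ := ihN (x + c) y hd' hxc hy hr' hc'
    obtain ⟨M1, hM1mem, hM1sum, hM1take⟩ :=
      lemA b hb p₁ L' x hL'ne hrows hcols hx (by rw [← hcdef]; exact hxc)
    refine ⟨M1 ++ M2, ?_, ?_, ?_⟩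
    · intro m hm
      rcases List.mem_append.mp hm with h | h
      · exact hM1mem m h
      · exact hM2mem m h
    · rw [List.sum_append, hM1sum, ← hcdef, ← add_assoc]
      exact hM2sum
    · intro k
      rw [List.take_append, List.sum_append]
      by_cases hk : k ≤ M1.length
      · rw [Nat.sub_eq_zero_of_le hk]
        simpa using hM1take k
      · have h1 : List.take k M1 = M1 := List.take_of_length_le (by omega)
        rw [h1, hM1sum, ← hcdef, ← add_assoc]
        exact hM2take (k - M1.length)

end BddMoves


/-- Any two tables with the same row and column sums, bounded by a strictly positive
bound `b`, are connected by signed basic moves through intermediate tables whose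
entries stay between `0` and `b`. -/
theorem connected_by_basic_moves_bounded {I J : ℕ} (n n' b : Fin I × Fin J → ℕ)
    (hb : ∀ p, 1 ≤ b p) (hnb : ∀ p, n p ≤ b p) (hn'b : ∀ p, n' p ≤ b p)
    (hrow : ∀ i : Fin I, ∑ j, n (i, j) = ∑ j, n' (i, j))
    (hcol : ∀ j : Fin J, ∑ i, n (i, j) = ∑ i, n' (i, j)) :
    ∃ L : List (Fin I × Fin J → ℤ),
      (∀ m ∈ L, ∃ (i1 i2 : Fin I) (j1 j2 : Fin J), i1 ≠ i2 ∧ j1 ≠ j2 ∧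
        (m = basicMove i1 i2 j1 j2 ∨ m = -basicMove i1 i2 j1 j2)) ∧
      ((fun p => (n p : ℤ)) + L.sum = fun p => (n' p : ℤ)) ∧
      (∀ k : ℕ, ∀ p : Fin I × Fin J,
        0 ≤ (n p : ℤ) + (L.take k).sum p ∧ (n p : ℤ) + (L.take k).sum p ≤ (b p : ℤ)) := by
  classical
  set x : Fin I × Fin J → ℤ := fun p => (n p : ℤ) with hxdef
  set y : Fin I × Fin J → ℤ := fun p => (n' p : ℤ) with hydef
  set bz : Fin I × Fin J → ℤ := fun p => (b p : ℤ) with hbzdef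
  have hbZ : ∀ p, (1:ℤ) ≤ bz p := fun p => by
    simp only [hbzdef]; exact_mod_cast hb p
  have hxB : BddMoves.InB bz x := fun p => by
    simp only [hxdef, hbzdef]
    exact ⟨Int.natCast_nonneg _, by exact_mod_cast hnb p⟩
  have hyB : BddMoves.InB bz y := fun p => by
    simp only [hydef, hbzdef]
    exact ⟨Int.natCast_nonneg _, by exact_mod_cast hn'b p⟩
  have hrZ : ∀ i, ∑ j, x (i, j) = ∑ j, y (i, j) := by
    intro i
    simp only [hxdef, hydef]
    exact_mod_cast hrow i
  have hcZ : ∀ j, ∑ i, x (i, j) = ∑ i, y (i, j) := by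
    intro j
    simp only [hxdef, hydef]
    exact_mod_cast hcol j
  obtain ⟨L, h1, h2, h3⟩ := BddMoves.mainZ bz hbZ
    (∑ p : Fin I × Fin J, |x p - y p|).toNat x y le_rfl hxB hyB hrZ hcZ
  refine ⟨L, fun m hm => h1 m hm, h2, ?_⟩
  intro k p
  have := h3 k p
  simpa using this
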